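/- Let γ^- and γ^+ be subsets of S(x_0,r_0) x R^2 with dist(γ^-, γ^+) > 0, and suppose a continuous characteristic curve t ↦ (X(t), V(t)) has the property that between any two visits to γ^- it must visit γ^+. Then the set of times t in [0,T] at which (X(t),V(t)) in γ^- is finite, with cardinality at most 1 + T · (sup speed of the curve in phase space) / dist(γ^-, γ^+). -/
import Mathlib


open Set

/-- A `δ`-separated subset of `[0,T]` is finite with at most `1 + T/δ` elements. -/
lemma sep_finite_aux {S : Set ℝ} {T δ : ℝ} (hT : 0 ≤ T) (hδ : 0 < δ)
    (hsub : S ⊆ Icc 0 T)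
    (hsep : ∀ a ∈ S, ∀ b ∈ S, a ≠ b → δ ≤ |a - b|) :
    S.Finite ∧ (S.ncard : ℝ) ≤ 1 + T / δ := by
  have hinj : Set.InjOn (fun t => ⌊t / δ⌋) S := by
    intro a ha b hb h
    by_contra hne
    have hd := hsep a ha b hb hne
    have h1 : |a / δ - b / δ| < 1 := by
      have ha1 := Int.floor_le (a / δ)
      have ha2 := Int.lt_floor_add_one (a / δ)
      have hb1 := Int.floor_le (b / δ)
      have hb2 := Int.lt_floor_add_one (b / δ)
      have hc : ((⌊a / δ⌋ : ℤ) : ℝ) = ((⌊b / δ⌋ : ℤ) : ℝ) := by exact_mod_cast h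
      rw [abs_lt]
      constructor <;> nlinarith
    have h2 : |a - b| < δ := by
      have : |a - b| = |a / δ - b / δ| * δ := by
        rw [div_sub_div_same, abs_div, abs_of_pos hδ, div_mul_cancel₀]
        exact ne_of_gt hδ
      rw [this]
      nlinarith
    linarith
  have himsub : (fun t => ⌊t / δ⌋) '' S ⊆ ↑(Finset.Icc (0 : ℤ) ⌊T / δ⌋) := by
    rintro _ ⟨t, ht, rfl⟩
    have h0 : (0 : ℝ) ≤ t / δ := div_nonneg (hsub ht).1 hδ.le
    have h1 : t / δ ≤ T / δ := by gcongr; exact (hsub ht).2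
    simp only [Finset.coe_Icc, Set.mem_Icc]
    exact ⟨Int.floor_nonneg.2 h0, Int.floor_le_floor h1⟩
  have himfin : ((fun t => ⌊t / δ⌋) '' S).Finite :=
    (Finset.Icc (0 : ℤ) ⌊T / δ⌋).finite_toSet.subset himsub
  have hSfin : S.Finite := Set.Finite.of_finite_image himfin hinj
  refine ⟨hSfin, ?_⟩
  have hcard : S.ncard ≤ (Finset.Icc (0 : ℤ) ⌊T / δ⌋).card := by
    rw [← Set.ncard_image_of_injOn hinj]
    have h := Set.ncard_le_ncard himsub (Finset.Icc (0 : ℤ) ⌊T / δ⌋).finite_toSet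
    rwa [Set.ncard_coe_finset] at h
  have hcard2 : (Finset.Icc (0 : ℤ) ⌊T / δ⌋).card = ⌊T / δ⌋.toNat + 1 := by
    rw [Int.card_Icc]
    have : (0:ℤ) ≤ ⌊T / δ⌋ := Int.floor_nonneg.2 (div_nonneg hT hδ.le)
    omega
  have hfl : (⌊T / δ⌋.toNat : ℝ) ≤ T / δ := by
    have h0 : (0:ℤ) ≤ ⌊T / δ⌋ := Int.floor_nonneg.2 (div_nonneg hT hδ.le)
    calc (⌊T / δ⌋.toNat : ℝ) = ((⌊T / δ⌋ : ℤ) : ℝ) := by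
          exact_mod_cast congrArg (Int.cast : ℤ → ℝ) (Int.toNat_of_nonneg h0)
      _ ≤ T / δ := Int.floor_le _
  calc (S.ncard : ℝ) ≤ ((⌊T / δ⌋.toNat + 1 : ℕ) : ℝ) := by
        exact_mod_cast hcard2 ▸ hcard
    _ = (⌊T / δ⌋.toNat : ℝ) + 1 := by push_cast; ring
    _ ≤ 1 + T / δ := by linarith

/-- If a Lipschitz curve in phase space must visit `γ⁺` between any two visits to `γ⁻`, and
`dist(γ⁻, γ⁺) ≥ ε > 0`, then the set of times in `[0,T]` spent in `γ⁻` is finite, of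
cardinality at most `1 + T·(phase-space speed)/ε`. -/
theorem statement15 (T : ℝ) (hT : 0 ≤ T)
    (γm γp : Set ((ℝ × ℝ) × (ℝ × ℝ)))
    (ε : ℝ) (hε : 0 < ε) (hsep : ∀ a ∈ γm, ∀ b ∈ γp, ε ≤ dist a b)
    (Z : ℝ → (ℝ × ℝ) × (ℝ × ℝ)) (Lz : NNReal) (hZ : LipschitzWith Lz Z)
    (hvisit : ∀ t t' : ℝ, t < t' → Z t ∈ γm → Z t' ∈ γm →
      ∃ u ∈ Ioo t t', Z u ∈ γp) :
    {t ∈ Icc (0:ℝ) T | Z t ∈ γm}.Finite ∧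
    (({t ∈ Icc (0:ℝ) T | Z t ∈ γm}.ncard : ℝ) ≤ 1 + T * Lz / ε) := by
  set S := {t ∈ Icc (0:ℝ) T | Z t ∈ γm} with hS
  -- key: for a < b both in γm-visit times, ε ≤ Lz * (b - a)
  have key : ∀ a b : ℝ, a < b → Z a ∈ γm → Z b ∈ γm → ε ≤ (Lz : ℝ) * (b - a) := by
    intro a b hab ha hb
    obtain ⟨u, hu, hup⟩ := hvisit a b hab ha hb
    have h1 : ε ≤ dist (Z a) (Z u) := hsep _ ha _ hup
    have h2 : dist (Z a) (Z u) ≤ (Lz : ℝ) * dist a u := hZ.dist_le_mul a u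
    have h3 : dist a u = u - a := by
      rw [Real.dist_eq, abs_sub_comm, abs_of_pos (by linarith [hu.1] : (0:ℝ) < u - a)]
    have h4 : (Lz : ℝ) * (u - a) ≤ (Lz : ℝ) * (b - a) :=
      mul_le_mul_of_nonneg_left (by linarith [hu.2]) Lz.coe_nonneg
    rw [h3] at h2
    linarith
  rcases eq_or_lt_of_le (Lz.coe_nonneg) with hL0 | hLpos
  · -- Lz = 0 : S is subsingleton
    have hsub : S.Subsingleton := by
      intro a ha b hb
      by_contra hne
      rcases lt_or_gt_of_ne hne with h | h
      · have := key a b h ha.2 hb.2; rw [← hL0] at this; linarith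
      · have := key b a h hb.2 ha.2; rw [← hL0] at this; linarith
    have hfin : S.Finite := hsub.finite
    refine ⟨hfin, ?_⟩
    have : S.ncard ≤ 1 := by
      rcases hsub.eq_empty_or_singleton with h | ⟨x, h⟩
      · simp [h]
      · simp [h]
    have hnn : 0 ≤ T * (Lz : ℝ) / ε := div_nonneg (mul_nonneg hT Lz.coe_nonneg) hε.le
    calc (S.ncard : ℝ) ≤ 1 := by exact_mod_cast this
      _ ≤ 1 + T * Lz / ε := by linarith
  · -- Lz > 0 : S is (ε/Lz)-separated
    have hδ : 0 < ε / (Lz : ℝ) := div_pos hε hLpos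
    have hsubset : S ⊆ Icc 0 T := fun t ht => ht.1
    have hsep' : ∀ a ∈ S, ∀ b ∈ S, a ≠ b → ε / (Lz : ℝ) ≤ |a - b| := by
      intro a ha b hb hne
      rcases lt_or_gt_of_ne hne with h | h
      · have := key a b h ha.2 hb.2
        rw [abs_of_neg (by linarith : a - b < 0)]
        rw [div_le_iff₀ hLpos]
        nlinarith
      · have := key b a h hb.2 ha.2
        rw [abs_of_pos (by linarith : 0 < a - b)]
        rw [div_le_iff₀ hLpos]
        nlinarith
    obtain ⟨hfin, hcard⟩ := sep_finite_aux hT hδ hsubset hsep'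
    refine ⟨hfin, ?_⟩
    have : T / (ε / (Lz : ℝ)) = T * Lz / ε := by
      field_simp
    rw [this] at hcard
    exact hcard
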